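/- Suppose g₁, g₂ satisfy the coupled system g₁' + f₁g₁ + f₀ + g₁g₂ = 0, g₂' + f₁g₂ + f₀ + g₁g₂ = 0, with g₁(t₁) − g₂(t₁) = C ≠ 0. Then g₁ satisfies the Riccati-type equation g₁' + [f₁ − C·exp(−∫_{t₁}^t f₁ ds)]·g₁ + f₀ + g₁² = 0. -/

import Mathlib

open intervalIntegral in
/-- With the coupled system and `C = g₁(t₁) - g₂(t₁) ≠ 0`, `g₁` satisfies
`g₁' + [f₁ - C exp(-∫_{t₁}^t f₁)] g₁ + f₀ + g₁² = 0`. -/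
theorem stmt_11 (I : Set ℝ) (hI : I.OrdConnected) (t₁ : ℝ) (ht₁ : t₁ ∈ I)
    (f₀ f₁ g₁ g₂ g₁' : ℝ → ℝ)
    (hf₀ : ContinuousOn f₀ I) (hf₁ : ContinuousOn f₁ I)
    (hg₁ : ∀ t ∈ I, HasDerivAt g₁ (g₁' t) t)
    (hsys₁ : ∀ t ∈ I, g₁' t + f₁ t * g₁ t + f₀ t + g₂ t * g₁ t = 0)
    (hg₂ : ∀ t ∈ I, HasDerivAt g₂ (-(f₁ t * g₂ t + f₀ t + g₂ t * g₁ t)) t)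
    (C : ℝ) (hC : C = g₁ t₁ - g₂ t₁) (hC0 : C ≠ 0) :
    ∀ t ∈ I,
      g₁' t + (f₁ t - C * Real.exp (-∫ s in t₁..t, f₁ s)) * g₁ t
        + f₀ t + (g₁ t) ^ 2 = 0 := by
  set F : ℝ → ℝ := fun x => ∫ s in t₁..x, f₁ s with hF
  set h : ℝ → ℝ := fun x => (g₁ x - g₂ x) * Real.exp (F x) with hh
  -- key: h is constant equal to C on I
  have key : ∀ t ∈ I, (g₁ t - g₂ t) * Real.exp (F t) = C := by
    intro t ht
    have hsub : Set.uIcc t₁ t ⊆ I := hI.uIcc_subset ht₁ ht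
    set a := min t₁ t with ha
    set b := max t₁ t with hb
    have hab : Set.uIcc t₁ t = Set.Icc a b := rfl
    have haI : a ∈ I := hsub (by rw [hab]; exact Set.left_mem_Icc.2 min_le_max)
    have hIccI : Set.Icc a b ⊆ I := by rw [← hab]; exact hsub
    -- F continuous on Icc a b
    have hint : IntervalIntegrable f₁ MeasureTheory.volume t₁ t :=
      (hf₁.mono hsub).intervalIntegrable
    have hFc : ContinuousOn F (Set.Icc a b) := by
      rw [← hab]
      exact intervalIntegral.continuousOn_primitive_interval' hint Set.left_mem_uIcc
    -- continuity of h on Icc a b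
    have hhc : ContinuousOn h (Set.Icc a b) := by
      apply ContinuousOn.mul
      · intro x hx
        exact ((hg₁ x (hIccI hx)).continuousAt.sub
          (hg₂ x (hIccI hx)).continuousAt).continuousWithinAt
      · exact Real.continuous_exp.comp_continuousOn hFc
    -- right derivative of h is zero on Ico a b
    have hderiv : ∀ x ∈ Set.Ico a b, HasDerivWithinAt h 0 (Set.Ici x) x := by
      intro x hx
      have hxI : x ∈ I := hIccI ⟨hx.1, hx.2.le⟩
      have hxb : x < b := hx.2
      have hbI : b ∈ I := hIccI (Set.right_mem_Icc.2 (min_le_max))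
      have hIocI : Set.Ioc x b ⊆ I := fun y hy =>
        hI.out hxI hbI ⟨hy.1.le, hy.2⟩
      -- F has right derivative f₁ x at x
      have hintx : IntervalIntegrable f₁ MeasureTheory.volume t₁ x := by
        apply (hf₁.mono _).intervalIntegrable
        exact hI.uIcc_subset ht₁ hxI
      have hmeas : StronglyMeasurableAtFilter f₁ (nhdsWithin x (Set.Ioi x))
          MeasureTheory.volume :=
        ⟨Set.Ioc x b, Ioc_mem_nhdsGT_of_mem ⟨le_refl x, hxb⟩,
          (hf₁.mono hIocI).aestronglyMeasurable measurableSet_Ioc⟩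
      have hcw : ContinuousWithinAt f₁ (Set.Ioi x) x := by
        apply (hf₁ x hxI).mono_of_mem_nhdsWithin
        exact Filter.mem_of_superset (Ioc_mem_nhdsGT_of_mem ⟨le_refl x, hxb⟩) hIocI
      have hFd : HasDerivWithinAt F (f₁ x) (Set.Ici x) x :=
        intervalIntegral.integral_hasDerivWithinAt_right hintx hmeas hcw
      -- u = g₁ - g₂ has derivative -(f₁ x * (g₁ x - g₂ x))
      have hu : HasDerivAt (fun y => g₁ y - g₂ y) (-(f₁ x * (g₁ x - g₂ x))) x := by
        have := (hg₁ x hxI).sub (hg₂ x hxI)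
        have e : g₁' x - -(f₁ x * g₂ x + f₀ x + g₂ x * g₁ x) = -(f₁ x * (g₁ x - g₂ x)) := by
          linear_combination hsys₁ x hxI
        rwa [e] at this
      have := hu.hasDerivWithinAt (s := Set.Ici x) |>.mul
        ((Real.hasDerivAt_exp (F x)).comp_hasDerivWithinAt x hFd)
      have e3 : -(f₁ x * (g₁ x - g₂ x)) * (Real.exp ∘ F) x + (g₁ x - g₂ x) * (Real.exp (F x) * f₁ x) = 0 := by
        rw [Function.comp_apply]; ring
      rw [e3] at this
      exact this
    have hconst := constant_of_has_deriv_right_zero hhc hderiv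
    have h1 : h t = h a := hconst t (by rw [← hab]; exact Set.right_mem_uIcc)
    have h2 : h t₁ = h a := hconst t₁ (by rw [← hab]; exact Set.left_mem_uIcc)
    have : h t = h t₁ := by rw [h1, h2]
    have ht₁val : h t₁ = C := by
      simp [hh, hF, intervalIntegral.integral_same, hC]
    simpa [hh] using this.trans ht₁val
  intro t ht
  have hu : g₁ t - g₂ t = C * Real.exp (-∫ s in t₁..t, f₁ s) := by
    have hk := key t ht
    have hexp : Real.exp (F t) ≠ 0 := Real.exp_ne_zero _
    field_simp [Real.exp_neg, hF] at hk ⊢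
    rw [← hk, Real.exp_neg]
    show _ = _ * Real.exp (F t) * (Real.exp (F t))⁻¹
    rw [mul_assoc, mul_inv_cancel₀ hexp, mul_one]
  linear_combination hsys₁ t ht + g₁ t * hu
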